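/- Let H be symmetric positive definite, G symmetric positive definite, D of full column rank, Y = GD, Δ = (DᵀY)⁻¹. Then the block BFGS update H⁺ = DΔDᵀ + (I − DΔYᵀ)H(I − YΔDᵀ) is symmetric positive definite. -/

import Mathlib

open Matrix

/-- The block BFGS update `H⁺ = DΔDᵀ + (I − DΔYᵀ)H(I − YΔDᵀ)` of a symmetric positive
definite `H`, with `G` symmetric positive definite, `D` full column rank, `Y = GD`,
`Δ = (DᵀY)⁻¹`, is symmetric positive definite. -/
theorem block_bfgs_posdef {d q : ℕ}
    (H G : Matrix (Fin d) (Fin d) ℝ) (hH : H.PosDef) (hG : G.PosDef)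
    (D : Matrix (Fin d) (Fin q) ℝ) (hD : D.rank = q) :
    let Y := G * D
    let Δ := (Dᵀ * Y)⁻¹
    (D * Δ * Dᵀ + (1 - D * Δ * Yᵀ) * H * (1 - Y * Δ * Dᵀ)).PosDef := by
  intro Y Δ
  classical
  -- D has trivial kernel
  have hDker : LinearMap.ker D.mulVecLin = ⊥ := by
    have h1 := D.mulVecLin.finrank_range_add_finrank_ker
    rw [show Module.finrank ℝ (LinearMap.range D.mulVecLin) = q from hD,
      Module.finrank_pi, Fintype.card_fin] at h1
    exact Submodule.finrank_eq_zero.mp (by omega)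
  have hDinj : ∀ v : Fin q → ℝ, D *ᵥ v = 0 → v = 0 := by
    intro v hv
    exact (LinearMap.ker_eq_bot.mp hDker) (by simpa using hv)
  -- DᵀGD posdef
  have hK : (Dᵀ * Y).PosDef := by
    refine Matrix.posDef_iff_dotProduct_mulVec.mpr ⟨?_, ?_⟩
    · have hGt : Gᵀ = G := by
        simpa [conjTranspose_eq_transpose_of_trivial] using hG.isHermitian.eq
      show (Dᵀ * Y)ᴴ = Dᵀ * Y
      simp [Y, conjTranspose_eq_transpose_of_trivial, transpose_mul, hGt, Matrix.mul_assoc]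
    · intro x hx
      have hDx : D *ᵥ x ≠ 0 := fun h => hx (hDinj x h)
      have := hG.dotProduct_mulVec_pos hDx
      simpa [Matrix.mul_assoc, ← mulVec_mulVec, dotProduct_mulVec, vecMul_transpose,
        Y] using this
  have hΔ : Δ.PosDef := hK.inv
  have hΔt : Δᵀ = Δ := by
    simpa [conjTranspose_eq_transpose_of_trivial] using hΔ.isHermitian.eq
  set B : Matrix (Fin d) (Fin d) ℝ := 1 - D * Δ * Yᵀ with hB
  have hBH : Bᴴ = 1 - Y * Δ * Dᵀ := by
    simp [hB, conjTranspose_eq_transpose_of_trivial, transpose_sub, transpose_mul,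
      transpose_transpose, hΔt, Matrix.mul_assoc]
  rw [← hBH]
  have h1 : (D * Δ * Dᵀ).PosSemidef := by
    simpa [conjTranspose_eq_transpose_of_trivial] using
      hΔ.posSemidef.mul_mul_conjTranspose_same D
  have h2 : (B * H * Bᴴ).PosSemidef := hH.posSemidef.mul_mul_conjTranspose_same B
  refine Matrix.posDef_iff_dotProduct_mulVec.mpr ⟨h1.isHermitian.add h2.isHermitian, fun x hx => ?_⟩
  have hstar : star x = x := by
    funext i; simp
  have q1eq : star x ⬝ᵥ (D * Δ * Dᵀ) *ᵥ x
      = star (Dᵀ *ᵥ x) ⬝ᵥ Δ *ᵥ (Dᵀ *ᵥ x) := by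
    rw [hstar, show star (Dᵀ *ᵥ x) = Dᵀ *ᵥ x from by funext i; simp,
      ← mulVec_mulVec, ← mulVec_mulVec, dotProduct_mulVec, ← mulVec_transpose]
  have q2eq : star x ⬝ᵥ (B * H * Bᴴ) *ᵥ x
      = star (Bᴴ *ᵥ x) ⬝ᵥ H *ᵥ (Bᴴ *ᵥ x) := by
    rw [hstar, show star (Bᴴ *ᵥ x) = Bᴴ *ᵥ x from by funext i; simp,
      ← mulVec_mulVec, ← mulVec_mulVec, dotProduct_mulVec,
      show Bᴴ = Bᵀ from conjTranspose_eq_transpose_of_trivial B, ← mulVec_transpose]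
  rw [add_mulVec, dotProduct_add]
  by_cases hy : Bᴴ *ᵥ x = 0
  · -- second term is zero; show first term positive
    have hxeq : x = Y *ᵥ (Δ *ᵥ (Dᵀ *ᵥ x)) := by
      have : (1 - Y * Δ * Dᵀ) *ᵥ x = 0 := hBH ▸ hy
      rw [sub_mulVec, one_mulVec, sub_eq_zero] at this
      conv_lhs => rw [this]
      rw [← mulVec_mulVec, ← mulVec_mulVec]
    have hDtx : Dᵀ *ᵥ x ≠ 0 := by
      intro h0
      apply hx
      rw [hxeq, h0, mulVec_zero, mulVec_zero]
    have ht2 : (B * H * Bᴴ) *ᵥ x = 0 := by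
      rw [← mulVec_mulVec, hy, mulVec_zero]
    rw [ht2, dotProduct_zero, add_zero, q1eq]
    exact hΔ.dotProduct_mulVec_pos hDtx
  · have h2pos : 0 < star x ⬝ᵥ (B * H * Bᴴ) *ᵥ x := by
      rw [q2eq]; exact hH.dotProduct_mulVec_pos hy
    have h1nn : 0 ≤ star x ⬝ᵥ (D * Δ * Dᵀ) *ᵥ x := h1.dotProduct_mulVec_nonneg x
    linarith
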